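/- Let D₁, D₂ be maximal isotropic subspaces of an orthogonal vector space E = V ⊕ V* (with canonical pairing) satisfying D₁ ∩ D₂ = 0. Then K = {(−ξ, ξ) : ξ ∈ V*} intersects the fiber product D₁ ⊕_V D₂ = {(d₁,d₂) : π(d₁) = π(d₂)} exactly in (D₁ ∩ V*) × (D₂ ∩ V*) ∩ diagonal-type elements, which is zero; hence the Baer sum D₁^⊤ ⊠ D₂ is isomorphic as a vector space to the fiber product D₁ ⊕_V D₂, and it equals the graph Γ_β of a skew map β : V* → V given by β = π ∘ P_{D₁}|_{V*}, where P_{D₁} is the projection onto D₁ along D₂. -/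

import Mathlib

/- Transverse Dirac structures in `E = V ⊕ V*` and their Baer sum.  `D₁, D₂` are maximal
isotropic with `D₁ ∩ D₂ = 0`, so `E = D₁ ⊕ D₂` with projection `P_{D₁}`.  Then:
(a) `K = {(−ξ, ξ)}` meets the fibre product `D₁ ⊕_V D₂` trivially;
(b) `β = π ∘ P_{D₁}|_{V*}` is a skew map `V* → V`;
(c) under the identification of the Baer sum `D₁^⊤ ⊠ D₂` with pairs
    `(d₁, d₂) ∈ D₁ × D₂` having the same `V`-component `X`, modulo `K`, the Baer sum
    equals the graph `Γ_β`: `X = β(ξ₁ − ξ₂)` where `ξᵢ` are the `V*`-components. -/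

noncomputable section

/-- The canonical pairing on `V ⊕ V*`. -/
def pairE {V : Type*} [AddCommGroup V] [Module ℝ V]
    (a b : V × Module.Dual ℝ V) : ℝ :=
  (1/2) * (a.2 b.1 + b.2 a.1)

-- pairE as a bilinear form
def pairB (V : Type*) [AddCommGroup V] [Module ℝ V] :
    LinearMap.BilinForm ℝ (V × Module.Dual ℝ V) :=
  LinearMap.mk₂ ℝ pairE
    (by intro a a' b; simp [pairE]; ring)
    (by intro r a b; simp [pairE]; ring)
    (by intro a b b'; simp [pairE]; ring)
    (by intro a r b; simp [pairE]; ring)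

lemma pairB_apply {V : Type*} [AddCommGroup V] [Module ℝ V]
    (a b : V × Module.Dual ℝ V) : pairB V a b = pairE a b := rfl

lemma pairE_symm {V : Type*} [AddCommGroup V] [Module ℝ V]
    (a b : V × Module.Dual ℝ V) : pairE a b = pairE b a := by
  simp [pairE]; ring

lemma pairB_refl {V : Type*} [AddCommGroup V] [Module ℝ V] :
    (pairB V).IsRefl := fun a b h => by
  rw [pairB_apply, pairE_symm, ← pairB_apply]; exact h

lemma pairB_nondeg {V : Type*} [AddCommGroup V] [Module ℝ V] [FiniteDimensional ℝ V] :
    (pairB V).Nondegenerate := by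
  refine (LinearMap.IsRefl.nondegenerate_iff_separatingLeft (B := pairB V)
    (fun a b h => pairB_refl a b h)).mpr ?_
  intro a h
  have h1 : ∀ η : Module.Dual ℝ V, η a.1 = 0 := by
    intro η
    have := h (0, η)
    simpa [pairB_apply, pairE] using this
  have h2 : ∀ x : V, a.2 x = 0 := by
    intro x
    have := h (x, 0)
    simpa [pairB_apply, pairE] using this
  have ha1 : a.1 = 0 := (Module.forall_dual_apply_eq_zero_iff ℝ a.1).mp h1
  have ha2 : a.2 = 0 := LinearMap.ext h2
  exact Prod.ext ha1 ha2

theorem baer_sum_transverse_dirac_is_poisson_graph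
    {V : Type*} [AddCommGroup V] [Module ℝ V] [FiniteDimensional ℝ V]
    (D₁ D₂ : Submodule ℝ (V × Module.Dual ℝ V))
    (h₁iso : ∀ a ∈ D₁, ∀ b ∈ D₁, pairE a b = 0)
    (h₂iso : ∀ a ∈ D₂, ∀ b ∈ D₂, pairE a b = 0)
    (h₁max : ∀ e, (∀ d ∈ D₁, pairE e d = 0) → e ∈ D₁)
    (h₂max : ∀ e, (∀ d ∈ D₂, pairE e d = 0) → e ∈ D₂)
    (hdisj : D₁ ⊓ D₂ = ⊥) :
    -- (a) K meets the fibre product D₁ ⊕_V D₂ trivially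
    (∀ ξ : Module.Dual ℝ V, ((0 : V), -ξ) ∈ D₁ → ((0 : V), ξ) ∈ D₂ → ξ = 0) ∧
    -- (b),(c): the Baer sum D₁^⊤ ⊠ D₂ is the graph of the skew map β = π ∘ P_{D₁}|_{V*}
    ∃ β : Module.Dual ℝ V →ₗ[ℝ] V,
      -- β is π ∘ P_{D₁} restricted to V*
      (∀ ξ : Module.Dual ℝ V, ∃ d₁ ∈ D₁, ∃ d₂ ∈ D₂,
        ((0 : V), ξ) = d₁ + d₂ ∧ β ξ = d₁.1) ∧
      -- β is skew-symmetric
      (∀ ξ η : Module.Dual ℝ V, η (β ξ) = -(ξ (β η))) ∧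
      -- D₁^⊤ ⊠ D₂ ⊆ Γ_β ...
      (∀ d₁ ∈ D₁, ∀ d₂ ∈ D₂, d₁.1 = d₂.1 → β (d₁.2 - d₂.2) = d₁.1) ∧
      -- ... and every point of Γ_β arises this way
      (∀ ζ : Module.Dual ℝ V, ∃ d₁ ∈ D₁, ∃ d₂ ∈ D₂,
        d₁.1 = d₂.1 ∧ d₁.2 - d₂.2 = ζ) := by
  set E := V × Module.Dual ℝ V
  set B := pairB V
  have hrefl : B.IsRefl := pairB_refl
  have hnd : B.Nondegenerate := pairB_nondeg
  -- each Dᵢ equals its own orthogonal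
  have horth : ∀ (D : Submodule ℝ E), (∀ a ∈ D, ∀ b ∈ D, pairE a b = 0) →
      (∀ e, (∀ d ∈ D, pairE e d = 0) → e ∈ D) → B.orthogonal D = D := by
    intro D hiso hmax
    apply le_antisymm
    · intro e he
      exact hmax e (fun d hd => by
        have h' : pairE d e = 0 := he d hd
        rw [pairE_symm]; exact h')
    · intro e he
      rw [LinearMap.BilinForm.mem_orthogonal_iff]
      intro n hn
      exact hiso n hn e he
  -- orthogonal of the sup is the inf, hence ⊥
  have hsuporth : B.orthogonal (D₁ ⊔ D₂) = ⊥ := by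
    rw [eq_bot_iff, ← hdisj]
    intro e he
    rw [LinearMap.BilinForm.mem_orthogonal_iff] at he
    exact ⟨horth D₁ h₁iso h₁max ▸ LinearMap.BilinForm.mem_orthogonal_iff.mpr
        (fun n hn => he n (Submodule.mem_sup_left hn)),
      horth D₂ h₂iso h₂max ▸ LinearMap.BilinForm.mem_orthogonal_iff.mpr
        (fun n hn => he n (Submodule.mem_sup_right hn))⟩
  have htop : D₁ ⊔ D₂ = ⊤ := by
    apply Submodule.eq_top_of_finrank_eq
    have := LinearMap.BilinForm.finrank_add_finrank_orthogonal hrefl (B := B) (D₁ ⊔ D₂)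
    rw [hsuporth, LinearMap.BilinForm.orthogonal_top_eq_bot hnd, inf_bot_eq] at this
    simp only [finrank_bot, add_zero] at this
    exact this
  have hcompl : IsCompl D₁ D₂ :=
    ⟨disjoint_iff.mpr hdisj, codisjoint_iff.mpr htop⟩
  set P := D₁.projectionOnto D₂ hcompl with hP
  -- decomposition lemma
  have hdec : ∀ e : E, (P e : E) ∈ D₁ ∧ e - (P e : E) ∈ D₂ := by
    intro e
    refine ⟨(P e).2, ?_⟩
    obtain ⟨y, z, hy, hz, hyz⟩ := Submodule.codisjoint_iff_exists_add_eq.mp hcompl.codisjoint e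
    have hy1 : P y = ⟨y, hy⟩ := Submodule.projectionOnto_apply_left hcompl ⟨y, hy⟩
    have hz1 : P z = 0 := Submodule.projectionOnto_apply_right hcompl ⟨z, hz⟩
    have : P e = ⟨y, hy⟩ := by rw [← hyz, map_add, hy1, hz1, add_zero]
    rw [this, ← hyz]
    simpa using hz
  set β : Module.Dual ℝ V →ₗ[ℝ] V :=
    (LinearMap.fst ℝ V (Module.Dual ℝ V)) ∘ₗ D₁.subtype ∘ₗ P ∘ₗ
      (LinearMap.inr ℝ V (Module.Dual ℝ V)) with hβ
  have hβdef : ∀ ξ, β ξ = (P ((0 : V), ξ) : E).1 := fun ξ => rfl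
  -- the decomposition statement
  have hdecomp : ∀ ξ : Module.Dual ℝ V, ∃ d₁ ∈ D₁, ∃ d₂ ∈ D₂,
      ((0 : V), ξ) = d₁ + d₂ ∧ β ξ = d₁.1 := by
    intro ξ
    obtain ⟨h1, h2⟩ := hdec ((0 : V), ξ)
    exact ⟨_, h1, _, h2, by abel, hβdef ξ⟩
  constructor
  · intro ξ hn hp
    have h1 : ((0 : V), ξ) ∈ D₁ := by
      have := D₁.neg_mem hn
      simpa using this
    have : ((0 : V), ξ) ∈ D₁ ⊓ D₂ := ⟨h1, hp⟩
    rw [hdisj] at this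
    simpa [Prod.ext_iff] using this
  refine ⟨β, hdecomp, ?_, ?_, ?_⟩
  · -- skew-symmetry
    intro ξ η
    obtain ⟨d₁, hd₁, d₂, hd₂, hsum, hb⟩ := hdecomp ξ
    obtain ⟨e₁, he₁, e₂, he₂, hsum', hb'⟩ := hdecomp η
    have key : pairE d₁ e₂ + pairE e₁ d₂ = 0 := by
      have h0 : pairE ((0:V), ξ) ((0:V), η) = 0 := by simp [pairE]
      rw [hsum, hsum'] at h0
      have expand : pairE (d₁ + d₂) (e₁ + e₂) =
          pairE d₁ e₁ + pairE d₁ e₂ + pairE d₂ e₁ + pairE d₂ e₂ := by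
        simp only [← pairB_apply, map_add, LinearMap.add_apply]; ring
      rw [expand, h₁iso d₁ hd₁ e₁ he₁, h₂iso d₂ hd₂ e₂ he₂,
        pairE_symm d₂ e₁] at h0
      linarith
    have hd₂1 : d₂.1 = -d₁.1 := by
      have h0 : (0:V) = d₁.1 + d₂.1 := congrArg Prod.fst hsum
      exact eq_neg_of_add_eq_zero_right h0.symm
    have he₂1 : e₂.1 = -e₁.1 := by
      have h0 : (0:V) = e₁.1 + e₂.1 := congrArg Prod.fst hsum'
      exact eq_neg_of_add_eq_zero_right h0.symm
    have hξ : d₁.2 + d₂.2 = ξ := by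
      have := congrArg Prod.snd hsum; simp at this; rw [this]
    have hη : e₁.2 + e₂.2 = η := by
      have := congrArg Prod.snd hsum'; simp at this; rw [this]
    -- η (β ξ) = η d₁.1,  ξ (β η) = ξ e₁.1
    rw [hb, hb']
    have e1 : η d₁.1 = 2 * (pairE d₁ e₂ + pairE d₁ e₁) := by
      simp only [pairE]
      have : e₂.2 d₁.1 = η d₁.1 - e₁.2 d₁.1 := by
        rw [← hη]; simp
      rw [this]
      have h1 : d₁.2 e₂.1 = -(d₁.2 e₁.1) := by rw [he₂1]; simp
      rw [h1]; ring
    have e2 : ξ e₁.1 = 2 * (pairE e₁ d₂ + pairE e₁ d₁) := by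
      simp only [pairE]
      have : d₂.2 e₁.1 = ξ e₁.1 - d₁.2 e₁.1 := by
        rw [← hξ]; simp
      rw [this]
      have h1 : e₁.2 d₂.1 = -(e₁.2 d₁.1) := by rw [hd₂1]; simp
      rw [h1]; ring
    rw [e1, e2, h₁iso d₁ hd₁ e₁ he₁, pairE_symm e₁ d₁, h₁iso d₁ hd₁ e₁ he₁]
    linarith [key]
  · -- Baer sum ⊆ graph
    intro d₁ hd₁ d₂ hd₂ hfst
    have hzero : ((0 : V), d₁.2 - d₂.2) = d₁ - d₂ := by
      ext <;> simp [hfst]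
    rw [hβdef, hzero, map_sub,
      Submodule.projectionOnto_apply_left hcompl ⟨d₁, hd₁⟩,
      Submodule.projectionOnto_apply_right hcompl ⟨d₂, hd₂⟩]
    simp
  · -- surjectivity onto the graph
    intro ζ
    obtain ⟨h1, h2⟩ := hdec ((0 : V), ζ)
    refine ⟨(P ((0:V), ζ) : E), h1, (P ((0:V), ζ) : E) - ((0:V), ζ), ?_, by simp, by simp⟩
    have := D₂.neg_mem h2
    simpa [neg_sub] using this
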